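/- If a differentiable function E : [0,T] → (0,∞) satisfies E'(t) ≤ C (1 + E(t)^{s/2}) E(t) for all t ∈ [0,T], then d/dt [ ln( E(t) / (1 + E(t)^{s/2})^{2/s} ) ] ≤ C for all t ∈ [0,T], and consequently E(t)/(1+E(t)^{s/2})^{2/s} ≤ E(0)/(1+E(0)^{s/2})^{2/s} · e^{Ct}. -/

import Mathlib

open Set Real

theorem stmt3 (s C T : ℝ) (hs : 1 ≤ s) (hC : 0 < C) (hT : 0 < T)
    (E E' : ℝ → ℝ)
    (hEpos : ∀ t ∈ Set.Icc (0 : ℝ) T, 0 < E t)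
    (hE : ∀ t ∈ Set.Icc (0 : ℝ) T, HasDerivAt E (E' t) t)
    (hineq : ∀ t ∈ Set.Icc (0 : ℝ) T, E' t ≤ C * (1 + E t ^ (s / 2)) * E t) :
    (∀ t ∈ Set.Icc (0 : ℝ) T, ∃ d : ℝ,
      HasDerivAt (fun τ : ℝ => Real.log (E τ / (1 + E τ ^ (s / 2)) ^ (2 / s))) d t ∧
      d ≤ C) ∧
    (∀ t ∈ Set.Icc (0 : ℝ) T,
      E t / (1 + E t ^ (s / 2)) ^ (2 / s) ≤
        E 0 / (1 + E 0 ^ (s / 2)) ^ (2 / s) * Real.exp (C * t)) := by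
  have hs0 : s ≠ 0 := by linarith
  set F : ℝ → ℝ := fun τ : ℝ => Real.log (E τ / (1 + E τ ^ (s / 2)) ^ (2 / s)) with hF
  have key : ∀ t ∈ Set.Icc (0 : ℝ) T,
      HasDerivAt F (E' t / (E t * (1 + E t ^ (s / 2)))) t := by
    intro t ht
    have he := hEpos t ht
    have hP : (0 : ℝ) < 1 + E t ^ (s / 2) := by positivity
    have hD : (0 : ℝ) < (1 + E t ^ (s / 2)) ^ (2 / s) := Real.rpow_pos_of_pos hP _
    have h1 : HasDerivAt (fun τ => E τ ^ (s / 2))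
        (E' t * (s / 2) * E t ^ (s / 2 - 1)) t :=
      (hE t ht).rpow_const (Or.inl he.ne')
    have h2 : HasDerivAt (fun τ => 1 + E τ ^ (s / 2))
        (E' t * (s / 2) * E t ^ (s / 2 - 1)) t := h1.const_add 1
    have h3 : HasDerivAt (fun τ => (1 + E τ ^ (s / 2)) ^ (2 / s))
        ((E' t * (s / 2) * E t ^ (s / 2 - 1)) * (2 / s) * (1 + E t ^ (s / 2)) ^ (2 / s - 1)) t :=
      h2.rpow_const (Or.inl hP.ne')
    have h4 := (hE t ht).div h3 hD.ne'
    have h5 := h4.log (by positivity : E t / (1 + E t ^ (s / 2)) ^ (2 / s) ≠ 0)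
    convert h5 using 1
    · rfl
    have e1 : E t ^ (s / 2 - 1) = E t ^ (s / 2) / E t := by
      rw [Real.rpow_sub he, Real.rpow_one]
    have e2 : (1 + E t ^ (s / 2)) ^ (2 / s - 1)
        = (1 + E t ^ (s / 2)) ^ (2 / s) / (1 + E t ^ (s / 2)) := by
      rw [Real.rpow_sub hP, Real.rpow_one]
    rw [e1, e2, Pi.div_apply]
    field_simp
    ring
  have hdle : ∀ t ∈ Set.Icc (0 : ℝ) T, E' t / (E t * (1 + E t ^ (s / 2))) ≤ C := by
    intro t ht
    have he := hEpos t ht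
    have hP : (0 : ℝ) < 1 + E t ^ (s / 2) := by positivity
    rw [div_le_iff₀ (by positivity)]
    have := hineq t ht
    nlinarith
  constructor
  · intro t ht
    exact ⟨_, key t ht, hdle t ht⟩
  · intro t ht
    -- antitone argument on g = F - C * id
    set g : ℝ → ℝ := fun τ => F τ - C * τ with hg
    have hgderiv : ∀ x ∈ Set.Icc (0 : ℝ) T,
        HasDerivAt g (E' x / (E x * (1 + E x ^ (s / 2))) - C) x := by
      intro x hx
      exact (key x hx).sub ((hasDerivAt_id x).const_mul C |>.congr_deriv (by ring))
    have hanti : AntitoneOn g (Set.Icc 0 T) := by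
      apply antitoneOn_of_deriv_nonpos (convex_Icc 0 T)
      · intro x hx
        exact (hgderiv x hx).continuousAt.continuousWithinAt
      · intro x hx
        rw [interior_Icc] at hx
        exact (hgderiv x (Ioo_subset_Icc_self hx)).differentiableAt.differentiableWithinAt
      · intro x hx
        rw [interior_Icc] at hx
        have hx' := Ioo_subset_Icc_self hx
        rw [(hgderiv x hx').deriv]
        have := hdle x hx'
        linarith
    have h0 : (0 : ℝ) ∈ Set.Icc (0 : ℝ) T := ⟨le_refl 0, hT.le⟩
    have hgt := hanti h0 ht ht.1
    -- g t ≤ g 0, i.e. F t ≤ F 0 + C * t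
    have hFle : F t ≤ F 0 + C * t := by
      simp only [hg] at hgt
      linarith [hgt]
    have heT := hEpos t ht
    have he0 := hEpos 0 h0
    have hPt : (0 : ℝ) < 1 + E t ^ (s / 2) := by positivity
    have hP0 : (0 : ℝ) < 1 + E 0 ^ (s / 2) := by positivity
    have hqt : (0 : ℝ) < E t / (1 + E t ^ (s / 2)) ^ (2 / s) := by
      have := Real.rpow_pos_of_pos hPt (2 / s); positivity
    have hq0 : (0 : ℝ) < E 0 / (1 + E 0 ^ (s / 2)) ^ (2 / s) := by
      have := Real.rpow_pos_of_pos hP0 (2 / s); positivity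
    calc E t / (1 + E t ^ (s / 2)) ^ (2 / s) = Real.exp (F t) := (Real.exp_log hqt).symm
      _ ≤ Real.exp (F 0 + C * t) := Real.exp_le_exp.mpr hFle
      _ = Real.exp (F 0) * Real.exp (C * t) := Real.exp_add _ _
      _ = E 0 / (1 + E 0 ^ (s / 2)) ^ (2 / s) * Real.exp (C * t) := by
          rw [Real.exp_log hq0]
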